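/- Let A be a real m×n matrix and b ∈ ℝ^m such that the set K := {x ∈ ℝ^n : x ≥ 0 and Ax = b} is compact, non-empty, and contains a point with all coordinates strictly positive. Then there exist an m×n real matrix Ā with all entries strictly positive and a vector b̄ ∈ ℝ^m with all entries strictly positive such that K = {x ∈ ℝ^n : x ≥ 0 and Āx = b̄}. -/

import Mathlib

open Filter Finset
set_option maxHeartbeats 1000000 in
/-- **Positive representation of a compact polytope.**
If `K = {x ≥ 0 : A x = b}` is compact, non-empty, and contains a point with all
coordinates strictly positive, then it admits a representation `K = {x ≥ 0 : Ā x = b̄}`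
in which all entries of the matrix `Ā` and of the vector `b̄` are strictly positive. -/
theorem exists_positive_representation
    (m n : ℕ) (hm : 0 < m) (hn : 0 < n)
    (A : Matrix (Fin m) (Fin n) ℝ) (b : Fin m → ℝ)
    (K : Set (Fin n → ℝ))
    (hK : K = {x : Fin n → ℝ | (∀ j, 0 ≤ x j) ∧ A.mulVec x = b})
    (hcompact : IsCompact K)
    (hne : K.Nonempty)
    (hint : ∃ x ∈ K, ∀ j, 0 < x j) :
    ∃ (Abar : Matrix (Fin m) (Fin n) ℝ) (bbar : Fin m → ℝ),
      (∀ i j, 0 < Abar i j) ∧ (∀ i, 0 < bbar i) ∧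
      K = {x : Fin n → ℝ | (∀ j, 0 ≤ x j) ∧ Abar.mulVec x = bbar} := by
  obtain ⟨x₀, hx₀K, hx₀pos⟩ := hint
  have hx₀ : (∀ j, 0 ≤ x₀ j) ∧ A.mulVec x₀ = b := by rw [hK] at hx₀K; exact hx₀K
  obtain ⟨C, hC⟩ : ∃ C, ∀ x ∈ K, ‖x‖ ≤ C := hcompact.isBounded.exists_norm_le
  -- trivial recession cone
  have hrec : ∀ v : Fin n → ℝ, (∀ j, 0 ≤ v j) → A.mulVec v = 0 → v = 0 := by
    intro v hv hAv
    by_contra hv0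
    obtain ⟨j, hj⟩ : ∃ j, v j ≠ 0 := by
      by_contra h; push_neg at h; exact hv0 (funext h)
    have hjpos : 0 < v j := lt_of_le_of_ne (hv j) (Ne.symm hj)
    have hC0 : 0 ≤ C := le_trans (norm_nonneg _) (hC x₀ hx₀K)
    set t : ℝ := (C + 1) / v j with htdef
    have htpos : 0 < t := div_pos (by linarith) hjpos
    have hmem : x₀ + t • v ∈ K := by
      rw [hK]
      refine ⟨fun k => add_nonneg (hx₀.1 k) (mul_nonneg htpos.le (hv k)), ?_⟩
      rw [Matrix.mulVec_add, Matrix.mulVec_smul, hAv, smul_zero, add_zero, hx₀.2]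
    have h1 : C + 1 ≤ (x₀ + t • v) j := by
      have : (x₀ + t • v) j = x₀ j + t * v j := rfl
      rw [this, htdef, div_mul_cancel₀ _ (ne_of_gt hjpos)]
      linarith [hx₀.1 j]
    have h2 : (x₀ + t • v) j ≤ ‖x₀ + t • v‖ := by
      calc (x₀ + t • v) j ≤ |(x₀ + t • v) j| := le_abs_self _
        _ = ‖(x₀ + t • v) j‖ := (Real.norm_eq_abs _).symm
        _ ≤ ‖x₀ + t • v‖ := norm_le_pi_norm _ j
    linarith [hC _ hmem]
  -- Gordan: separate 0 from the image of the standard simplex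
  set S : Set (Fin m → ℝ) := A.mulVecLin '' stdSimplex ℝ (Fin n) with hS
  have hconv : Convex ℝ S := (convex_stdSimplex ℝ (Fin n)).linear_image A.mulVecLin
  have hScompact : IsCompact S :=
    (isCompact_stdSimplex ℝ (Fin n)).image A.mulVecLin.continuous_of_finiteDimensional
  have h0S : (0 : Fin m → ℝ) ∉ S := by
    rintro ⟨x, hx, hAx⟩
    have hx0 : x = 0 := hrec x hx.1 hAx
    have := hx.2
    rw [hx0] at this
    simp at this
  obtain ⟨f, u, hfu, hfS⟩ := geometric_hahn_banach_point_closed hconv hScompact.isClosed h0S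
  have hu : 0 < u := by simpa using hfu
  set L : (Fin n → ℝ) →ₗ[ℝ] ℝ := f.toLinearMap.comp A.mulVecLin with hL
  set r : Fin n → ℝ := fun i => L fun j => if i = j then 1 else 0 with hr
  have hLx : ∀ x : Fin n → ℝ, L x = ∑ j, x j * r j := by
    intro x
    simpa [smul_eq_mul] using L.pi_apply_eq_sum_univ x
  have hrpos : ∀ i, 0 < r i := by
    intro i
    have hmem : (fun j => if i = j then (1:ℝ) else 0) ∈ stdSimplex ℝ (Fin n) :=
      ⟨fun j => by positivity, by simp⟩
    exact hu.trans (hfS _ ⟨_, hmem, rfl⟩)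
  set ρ : ℝ := f b with hρdef
  have hLb : ∀ x : Fin n → ℝ, A.mulVec x = b → ∑ j, x j * r j = ρ := by
    intro x hx
    rw [← hLx]
    show f (A.mulVecLin x) = ρ
    rw [Matrix.mulVecLin_apply, hx]
  have hρ : 0 < ρ := by
    rw [← hLb x₀ hx₀.2]
    have : Nonempty (Fin n) := ⟨⟨0, hn⟩⟩
    exact Finset.sum_pos (fun j _ => mul_pos (hx₀pos j) (hrpos j)) Finset.univ_nonempty
  set s : ℝ := f 1 with hs
  -- choose t large
  have hev1 : ∀ᶠ t : ℝ in atTop, ∀ i : Fin m, ∀ j : Fin n, 0 < A i j + t * r j := by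
    rw [Filter.eventually_all]; intro i; rw [Filter.eventually_all]; intro j
    exact (tendsto_atTop_add_const_left _ _
      (tendsto_id.atTop_mul_const (hrpos j))).eventually_gt_atTop 0
  have hev2 : ∀ᶠ t : ℝ in atTop, ∀ i : Fin m, 0 < b i + t * ρ := by
    rw [Filter.eventually_all]; intro i
    exact (tendsto_atTop_add_const_left _ _
      (tendsto_id.atTop_mul_const hρ)).eventually_gt_atTop 0
  have hev3 : ∀ᶠ t : ℝ in atTop, (1 : ℝ) + t * s ≠ 0 := by
    rcases eq_or_ne s 0 with h | h
    · filter_upwards with t; simp [h]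
    · filter_upwards [eventually_ne_atTop (-1 / s)] with t ht heq
      apply ht
      field_simp
      linarith
  obtain ⟨t, ht1, ht2, ht3⟩ := (hev1.and (hev2.and hev3)).exists
  refine ⟨fun i j => A i j + t * r j, fun i => b i + t * ρ, ht1, ht2, ?_⟩
  have hmul : ∀ x : Fin n → ℝ, ∀ i,
      Matrix.mulVec (fun i j => A i j + t * r j) x i
        = A.mulVec x i + t * ∑ j, x j * r j := by
    intro x i
    simp only [Matrix.mulVec, dotProduct, add_mul, Finset.sum_add_distrib,
      Finset.mul_sum]
    congr 1
    apply Finset.sum_congr rfl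
    intro j _
    ring
  ext x
  rw [hK]
  simp only [Set.mem_setOf_eq]
  constructor
  · rintro ⟨hx, hAx⟩
    refine ⟨hx, ?_⟩
    funext i
    rw [hmul x i, hLb x hAx, hAx]
  · rintro ⟨hx, hAx⟩
    refine ⟨hx, ?_⟩
    set q : ℝ := ∑ j, x j * r j with hq
    have key : ∀ i, A.mulVec x i + t * q = b i + t * ρ := by
      intro i
      rw [← hmul x i, hAx]
    have hvec : A.mulVec x + (t * q) • (1 : Fin m → ℝ) = b + (t * ρ) • 1 := by
      funext i
      have := key i
      simp only [Pi.add_apply, Pi.smul_apply, Pi.one_apply, smul_eq_mul, mul_one]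
      linarith
    have hfq : f (A.mulVec x) = q := by
      have : f (A.mulVecLin x) = q := by rw [hq, ← hLx]; rfl
      simpa using this
    have happ := congrArg f hvec
    rw [map_add, map_add, map_smul, map_smul, hfq] at happ
    have hqρ : q * (1 + t * s) = ρ * (1 + t * s) := by
      simp only [smul_eq_mul, ← hs, ← hρdef] at happ
      ring_nf
      ring_nf at happ
      linarith
    have hqρ' : q = ρ := mul_right_cancel₀ ht3 hqρ
    funext i
    have := key i
    rw [hqρ'] at this
    linarith
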